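/- Let P and Q be probability measures on a finite set, and f a function bounded in absolute value by R_max. Then |E_P[f] - E_Q[f]| \le 2 R_max \sqrt{1 - exp(-D_KL(P || Q))}. -/

import Mathlib

/-- Hölder + Bretagnolle–Huber bound on difference of expectations. -/
theorem expectation_gap_bretagnolle_huber
    {Ω : Type*} [Fintype Ω]
    (P Q : Ω → ℝ) (f : Ω → ℝ) (Rmax : ℝ)
    (hP0 : ∀ x, 0 ≤ P x) (hP1 : ∑ x, P x = 1)
    (hQ0 : ∀ x, 0 ≤ Q x) (hQ1 : ∑ x, Q x = 1)
    (hac : ∀ x, 0 < P x → 0 < Q x)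
    (hf : ∀ x, |f x| ≤ Rmax) :
    |(∑ x, P x * f x) - ∑ x, Q x * f x| ≤
      2 * Rmax * Real.sqrt (1 - Real.exp (-(∑ x, P x * Real.log (P x / Q x)))) := by
  classical
  set KL := ∑ x, P x * Real.log (P x / Q x) with hKLdef
  have hΩ : Nonempty Ω := by
    by_contra h
    rw [not_nonempty_iff] at h
    simp [Finset.sum_eq_zero] at hP1
  obtain ⟨x0⟩ := hΩ
  have hR : 0 ≤ Rmax := le_trans (abs_nonneg _) (hf x0)
  set T := ∑ x, |P x - Q x| with hTdef
  have hT0 : 0 ≤ T := Finset.sum_nonneg fun x _ => abs_nonneg _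
  -- Step 1: Hölder
  have step1 : |(∑ x, P x * f x) - ∑ x, Q x * f x| ≤ Rmax * T := by
    rw [← Finset.sum_sub_distrib]
    calc |∑ x, (P x * f x - Q x * f x)| ≤ ∑ x, |P x * f x - Q x * f x| :=
          Finset.abs_sum_le_sum_abs _ _
      _ = ∑ x, |P x - Q x| * |f x| := by
          refine Finset.sum_congr rfl fun x _ => ?_
          rw [← sub_mul, abs_mul]
      _ ≤ ∑ x, |P x - Q x| * Rmax := by
          refine Finset.sum_le_sum fun x _ => ?_
          exact mul_le_mul_of_nonneg_left (hf x) (abs_nonneg _)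
      _ = Rmax * T := by rw [hTdef, ← Finset.sum_mul]; ring
  -- Jensen: exp(-KL/2) ≤ ∑ √(P Q)
  have jensen : Real.exp (∑ x, P x * ((1/2) * Real.log (Q x / P x))) ≤
      ∑ x, P x * Real.exp ((1/2) * Real.log (Q x / P x)) := by
    have := convexOn_exp.map_sum_le (t := Finset.univ)
      (w := P) (p := fun x => (1/2) * Real.log (Q x / P x))
      (fun i _ => hP0 i) hP1 (fun i _ => Set.mem_univ _)
    simpa [smul_eq_mul] using this
  have hterm : ∀ x, P x * Real.exp ((1/2) * Real.log (Q x / P x)) =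
      Real.sqrt (P x * Q x) := by
    intro x
    rcases eq_or_lt_of_le (hP0 x) with h | hPx
    · simp [← h]
    · have hQx := hac x hPx
      have hr : 0 < Q x / P x := div_pos hQx hPx
      have : Real.exp ((1/2) * Real.log (Q x / P x)) = Real.sqrt (Q x / P x) := by
        rw [Real.sqrt_eq_rpow, Real.rpow_def_of_pos hr, mul_comm]
      rw [this]
      rw [show P x * Q x = (P x)^2 * (Q x / P x) by field_simp,
        Real.sqrt_mul (sq_nonneg _), Real.sqrt_sq hPx.le]
  have hsumlog : ∑ x, P x * ((1/2) * Real.log (Q x / P x)) = -KL / 2 := by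
    rw [hKLdef, show -(∑ x : Ω, P x * Real.log (P x / Q x)) / 2 =
        ∑ x : Ω, -(P x * Real.log (P x / Q x)) / 2 by
      rw [← Finset.sum_neg_distrib, Finset.sum_div]]
    refine Finset.sum_congr rfl fun x _ => ?_
    rcases eq_or_lt_of_le (hP0 x) with h | hPx
    · simp [← h]
    · have hQx := hac x hPx
      rw [show Q x / P x = (P x / Q x)⁻¹ by rw [inv_div], Real.log_inv]
      ring
  set S := ∑ x, Real.sqrt (P x * Q x) with hSdef
  have hS : Real.exp (-KL / 2) ≤ S := by
    rw [← hsumlog, hSdef]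
    calc Real.exp (∑ x, P x * ((1/2) * Real.log (Q x / P x))) ≤
        ∑ x, P x * Real.exp ((1/2) * Real.log (Q x / P x)) := jensen
      _ = ∑ x, Real.sqrt (P x * Q x) := Finset.sum_congr rfl fun x _ => hterm x
  -- Cauchy-Schwarz: S² ≤ (∑ min)(∑ max)
  have hCS : S ^ 2 ≤ (∑ x, min (P x) (Q x)) * ∑ x, max (P x) (Q x) := by
    refine Finset.sum_sq_le_sum_mul_sum_of_sq_eq_mul _
      (fun i _ => le_min (hP0 i) (hQ0 i))
      (fun i _ => le_max_of_le_left (hP0 i))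
      (fun i _ => ?_)
    rw [Real.sq_sqrt (mul_nonneg (hP0 i) (hQ0 i)), min_mul_max]
  have hmin : ∑ x, min (P x) (Q x) = 1 - T / 2 := by
    have : ∀ x, min (P x) (Q x) = (P x + Q x - |P x - Q x|) / 2 := by
      intro x
      rcases le_total (P x) (Q x) with h | h
      · rw [min_eq_left h, abs_of_nonpos (by linarith)]; ring
      · rw [min_eq_right h, abs_of_nonneg (by linarith)]; ring
    simp_rw [this]
    rw [← Finset.sum_div, hTdef]
    rw [Finset.sum_sub_distrib, Finset.sum_add_distrib, hP1, hQ1]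
    ring
  have hmax : ∑ x, max (P x) (Q x) = 1 + T / 2 := by
    have : ∀ x, max (P x) (Q x) = (P x + Q x + |P x - Q x|) / 2 := by
      intro x
      rcases le_total (P x) (Q x) with h | h
      · rw [max_eq_right h, abs_of_nonpos (by linarith)]; ring
      · rw [max_eq_left h, abs_of_nonneg (by linarith)]; ring
    simp_rw [this]
    rw [← Finset.sum_div, hTdef]
    rw [Finset.sum_add_distrib, Finset.sum_add_distrib, hP1, hQ1]
    ring
  have hexp : Real.exp (-KL) ≤ 1 - (T / 2) ^ 2 := by
    have h1 : Real.exp (-KL) = Real.exp (-KL / 2) ^ 2 := by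
      rw [sq, ← Real.exp_add]; ring_nf
    have h2 : Real.exp (-KL / 2) ^ 2 ≤ S ^ 2 := by
      have h3 : 0 ≤ Real.exp (-KL / 2) := (Real.exp_pos _).le
      exact pow_le_pow_left₀ h3 hS 2
    calc Real.exp (-KL) = Real.exp (-KL / 2) ^ 2 := h1
      _ ≤ S ^ 2 := h2
      _ ≤ (∑ x, min (P x) (Q x)) * ∑ x, max (P x) (Q x) := hCS
      _ = 1 - (T / 2) ^ 2 := by rw [hmin, hmax]; ring
  have hTle : T ≤ 2 * Real.sqrt (1 - Real.exp (-KL)) := by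
    have h4 : (T / 2) ^ 2 ≤ 1 - Real.exp (-KL) := by linarith
    have h5 : T / 2 ≤ Real.sqrt (1 - Real.exp (-KL)) := by
      have := Real.sqrt_le_sqrt h4
      rwa [Real.sqrt_sq (by linarith : (0:ℝ) ≤ T / 2)] at this
    linarith
  calc |(∑ x, P x * f x) - ∑ x, Q x * f x| ≤ Rmax * T := step1
    _ ≤ Rmax * (2 * Real.sqrt (1 - Real.exp (-KL))) :=
        mul_le_mul_of_nonneg_left hTle hR
    _ = 2 * Rmax * Real.sqrt (1 - Real.exp (-KL)) := by ring
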